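/- Let L be a finite sequence of labeled nodes, each with a key and a type in {INS, DEL}, and let L' be obtained by deleting every DEL node that is not the last node in L with its key. Then in L', for every key x, there is at most one DEL node with key x, and if present it occurs after every INS node with key x in L'. -/

import Mathlib

/-- Given a list of nodes, each a pair `(key, isDel)` (second component `true` means a DEL
node, `false` an INS node), delete every DEL node such that some node with the same key
occurs later in the list, preserving the order of the remaining nodes. -/
def removeStaleDel : List (ℤ × Bool) → List (ℤ × Bool)
  | [] => []
  | a :: t =>
      if a.2 = true ∧ a.1 ∈ t.map Prod.fst then removeStaleDel t
      else a :: removeStaleDel t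

lemma removeStaleDel_sublist (L : List (ℤ × Bool)) : (removeStaleDel L).Sublist L := by
  induction L with
  | nil => simp [removeStaleDel]
  | cons a t ih =>
    rw [removeStaleDel]
    split
    · exact ih.trans (List.sublist_cons_self a t)
    · exact ih.cons₂ a

lemma removeStaleDel_pairwise (L : List (ℤ × Bool)) :
    (removeStaleDel L).Pairwise (fun a b => a.2 = true → a.1 ≠ b.1) := by
  induction L with
  | nil => simp [removeStaleDel]
  | cons a t ih =>
    rw [removeStaleDel]
    split
    · exact ih
    · rename_i h
      refine List.pairwise_cons.2 ⟨fun b hb ha2 hab => ?_, ih⟩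
      exact h ⟨ha2, hab ▸ List.mem_map_of_mem (f := Prod.fst) ((removeStaleDel_sublist t).subset hb)⟩

/-- Let `L'` be obtained from `L` by deleting every DEL node that is not the last node in
`L` with its key.  Then in `L'`, for every key there is at most one DEL node with that key,
and if present it occurs after every INS node with that key in `L'`. -/
theorem removeStaleDel_spec (L : List (ℤ × Bool)) :
    (∀ i j : Fin (removeStaleDel L).length,
        ((removeStaleDel L).get i).2 = true → ((removeStaleDel L).get j).2 = true →
        ((removeStaleDel L).get i).1 = ((removeStaleDel L).get j).1 → i = j) ∧
    (∀ i j : Fin (removeStaleDel L).length,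
        ((removeStaleDel L).get i).2 = true → ((removeStaleDel L).get j).2 = false →
        ((removeStaleDel L).get i).1 = ((removeStaleDel L).get j).1 → j < i) := by
  have hp := (List.pairwise_iff_get).1 (removeStaleDel_pairwise L)
  constructor
  · intro i j hi hj hij
    rcases lt_trichotomy i j with h | h | h
    · exact absurd hij (hp i j h hi)
    · exact Fin.ext (by exact_mod_cast congrArg Fin.val h)
    · exact absurd hij.symm (hp j i h hj)
  · intro i j hi hj hij
    rcases lt_trichotomy i j with h | h | h
    · exact absurd hij (hp i j h hi)
    · rw [h] at hi; rw [hi] at hj; exact absurd hj (by simp)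
    · exact h
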